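/- If a global solution u of the Stokes system with 1-periodic elliptic coefficients has the form u = H + (P_j^β + χ_j^β)E_j^β, and this function vanishes identically on ℝ^d, then E = 0 and H = 0. Consequently the representation of u by (H, E) is unique. -/

import Mathlib

open MeasureTheory Metric Bornology

noncomputable section

abbrev Rd (d : ℕ) := EuclideanSpace ℝ (Fin d)

/-- Partial derivative `∂f/∂x_j` at `x`. -/
noncomputable def pd {d : ℕ} (f : Rd d → ℝ) (j : Fin d) (x : Rd d) : ℝ :=
  fderiv ℝ f x (EuclideanSpace.single j 1)

/-- `|∇u|²` for a vector field `u`. -/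
noncomputable def gradNormSq {d : ℕ} (u : Rd d → Rd d) (x : Rd d) : ℝ :=
  ∑ j, ∑ β, (pd (fun y => u y β) j x) ^ 2

/-- divergence of a vector field -/
noncomputable def divg {d : ℕ} (u : Rd d → Rd d) (x : Rd d) : ℝ :=
  ∑ j, pd (fun y => u y j) j x

/-- Coefficient tensor `A y i j α β ~ a_{ij}^{αβ}(y)`. -/
abbrev Coeff (d : ℕ) := Rd d → Fin d → Fin d → Fin d → Fin d → ℝ

/-- Ellipticity: `μ|ξ|² ≤ a_{ij}^{αβ} ξ_i^α ξ_j^β ≤ μ⁻¹ |ξ|²`. -/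
def IsElliptic {d : ℕ} (μ : ℝ) (A : Coeff d) : Prop :=
  ∀ y (ξ : Fin d → Fin d → ℝ),
    μ * (∑ i, ∑ α, (ξ i α) ^ 2) ≤ (∑ i, ∑ j, ∑ α, ∑ β, A y i j α β * (ξ i α) * (ξ j β)) ∧
    (∑ i, ∑ j, ∑ α, ∑ β, A y i j α β * (ξ i α) * (ξ j β)) ≤ μ⁻¹ * (∑ i, ∑ α, (ξ i α) ^ 2)

def intVec {d : ℕ} (z : Fin d → ℤ) : Rd d := WithLp.toLp 2 (fun i => (z i : ℝ))

/-- 1-periodicity of a function on `ℝ^d`. -/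
def IsPeriodicFun {d : ℕ} {E : Type*} (w : Rd d → E) : Prop :=
  ∀ y (z : Fin d → ℤ), w (y + intVec z) = w y

/-- The unit cell `Y = [0,1)^d`. -/
def Ycell (d : ℕ) : Set (Rd d) := {y | ∀ i, y i ∈ Set.Ico (0 : ℝ) 1}

/-- The bilinear form `a_per(ψ,φ) = ∫_Y a_{ij}^{αβ} ∂_j ψ^β ∂_i φ^α`. -/
noncomputable def aper {d : ℕ} (A : Coeff d) (ψ φ : Rd d → Rd d) : ℝ :=
  ∫ y in Ycell d, ∑ i, ∑ j, ∑ α, ∑ β,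
    A y i j α β * pd (fun z => ψ z β) j y * pd (fun z => φ z α) i y

/-- `P_j^β(y) = y_j e^β`. -/
def Pfun {d : ℕ} (j β : Fin d) : Rd d → Rd d := fun y => EuclideanSpace.single β (y j)

/-- Membership in `V_per(Y)`: periodic, divergence free, mean zero. -/
def MemVper {d : ℕ} (u : Rd d → Rd d) : Prop :=
  ContDiff ℝ 1 u ∧ IsPeriodicFun u ∧ (∀ x, divg u x = 0) ∧ (∫ y in Ycell d, u y) = 0

/-- `χ` is the family of correctors for the Stokes system with coefficients `A`. -/
def IsCorrector {d : ℕ} (A : Coeff d) (χ : Fin d → Fin d → Rd d → Rd d) : Prop :=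
  ∀ j β, MemVper (χ j β) ∧
    ∀ φ, MemVper φ → aper A (χ j β) φ = - aper A (Pfun j β) φ

/-- The homogenized coefficients `â_{ij}^{αβ}`. -/
noncomputable def Ahat {d : ℕ} (A : Coeff d) (χ : Fin d → Fin d → Rd d → Rd d)
    (i j α β : Fin d) : ℝ :=
  aper A (fun y => χ j β y + Pfun j β y) (fun y => χ i α y + Pfun i α y)

/-- Weak solution of `-div(Acoef ∇u) + ∇p = F + div f`, `div u = g` in `Ω`. -/
def IsStokesWeakSol {d : ℕ} (Acoef : Coeff d) (Ω : Set (Rd d))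
    (u : Rd d → Rd d) (p : Rd d → ℝ) (F : Rd d → Rd d)
    (f : Rd d → Fin d → Fin d → ℝ) (g : Rd d → ℝ) : Prop :=
  (∀ x ∈ Ω, divg u x = g x) ∧
  ∀ φ : Rd d → Rd d, ContDiff ℝ 1 φ → HasCompactSupport φ → tsupport φ ⊆ Ω →
    (∫ x in Ω, ∑ i, ∑ j, ∑ α, ∑ β,
        Acoef x i j α β * pd (fun y => u y β) j x * pd (fun y => φ y α) i x)
      - (∫ x in Ω, p x * divg φ x)
      = (∫ x in Ω, ∑ α, F x α * φ x α)
        - (∫ x in Ω, ∑ i, ∑ α, f x i α * pd (fun y => φ y α) i x)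


lemma vol_Ycell (d : ℕ) : volume (Ycell d) = 1 := by
  have h := (EuclideanSpace.volume_preserving_symm_measurableEquiv_toLp (ι := Fin d)).measure_preimage
    (s := Set.univ.pi fun _ : Fin d => Set.Ico (0:ℝ) 1)
    (by exact (MeasurableSet.univ_pi fun _ => measurableSet_Ico).nullMeasurableSet)
  have hset : (MeasurableEquiv.toLp 2 (Fin d → ℝ)).symm ⁻¹' (Set.univ.pi fun _ => Set.Ico (0:ℝ) 1) = Ycell d := by
    ext y; simp [Ycell, Set.mem_pi]
  rw [hset] at h
  rw [h, volume_pi_pi]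
  simp

lemma ycell_subset (d : ℕ) : Ycell d ⊆ Metric.closedBall 0 (Real.sqrt d) := by
  intro y hy
  rw [Metric.mem_closedBall, dist_zero_right, EuclideanSpace.norm_eq]
  apply Real.sqrt_le_sqrt
  calc ∑ i, ‖y i‖ ^ 2 ≤ ∑ _i : Fin d, (1:ℝ) := by
        apply Finset.sum_le_sum
        intro i _
        have h := hy i
        have h0 : 0 ≤ y i := h.1
        have h1 : y i < 1 := h.2
        rw [Real.norm_eq_abs, abs_of_nonneg h0]
        nlinarith
    _ = d := by simp


/-- uniqueness of the representation `u = H + (P_j^β + χ_j^β)E_j^β`: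
if this function vanishes identically then `E = 0` and `H = 0`. -/
theorem representation_unique {d : ℕ} (χ : Fin d → Fin d → Rd d → Rd d)
    (hsm : ∀ j β, ContDiff ℝ 1 (χ j β))
    (hper : ∀ j β, IsPeriodicFun (χ j β))
    (hmeangrad : ∀ (j β i α : Fin d),
      (∫ y in Ycell d, pd (fun z => χ j β z α) i y) = 0)
    (H : Rd d) (E : Fin d → Fin d → ℝ)
    (hzero : ∀ x : Rd d,
      H + ∑ j, ∑ β, E j β • (Pfun j β x + χ j β x) = 0) :
    E = 0 ∧ H = 0 := by
  have hE : E = 0 := by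
    funext j β
    simp only [Pi.zero_apply]
    -- coordinate function
    set D : Fin d → Fin d → Rd d → (Rd d →L[ℝ] ℝ) :=
      fun j' β' x => fderiv ℝ (fun z => χ j' β' z β) x with hD
    have hχd : ∀ (j' β' : Fin d) (x : Rd d),
        HasFDerivAt (fun z => χ j' β' z β) (D j' β' x) x := by
      intro j' β' x
      have hdiff : Differentiable ℝ (fun z => χ j' β' z β) :=
        (EuclideanSpace.proj β : Rd d →L[ℝ] ℝ).differentiable.comp
          ((hsm j' β').differentiable one_ne_zero)
      exact (hdiff x).hasFDerivAt
    have hPd : ∀ (j' β' : Fin d) (x : Rd d),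
        HasFDerivAt (fun z : Rd d => (Pfun j' β' z) β)
          ((if β = β' then (1:ℝ) else 0) • (EuclideanSpace.proj j' : Rd d →L[ℝ] ℝ)) x := by
      intro j' β' x
      have heq : (fun z : Rd d => (Pfun j' β' z) β)
          = fun z : Rd d => ((if β = β' then (1:ℝ) else 0) • (EuclideanSpace.proj j' : Rd d →L[ℝ] ℝ)) z := by
        funext z
        simp [Pfun, EuclideanSpace.single_apply]
        split <;> simp
      rw [heq]
      exact ((if β = β' then (1:ℝ) else 0) • (EuclideanSpace.proj j' : Rd d →L[ℝ] ℝ)).hasFDerivAt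
    set f : Rd d → ℝ := fun x => H β + ∑ j', ∑ β', E j' β' *
        ((Pfun j' β' x) β + (χ j' β' x) β) with hf
    have hf0 : f = fun _ => 0 := by
      funext x
      have h := congrArg (EuclideanSpace.proj β : Rd d →L[ℝ] ℝ) (hzero x)
      simp only [map_add, map_sum, _root_.map_smul, PiLp.proj_apply, smul_eq_mul, map_zero] at h
      simpa [f, mul_add] using h
    set L : Rd d → (Rd d →L[ℝ] ℝ) := fun x => ∑ j', ∑ β', E j' β' •
        (((if β = β' then (1:ℝ) else 0) • (EuclideanSpace.proj j' : Rd d →L[ℝ] ℝ)) + D j' β' x)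
      with hL
    have hfd : ∀ x, HasFDerivAt f (L x) x := by
      intro x
      apply HasFDerivAt.const_add
      apply HasFDerivAt.fun_sum
      intro j' _
      apply HasFDerivAt.fun_sum
      intro β' _
      exact ((hPd j' β' x).add (hχd j' β' x)).const_mul (E j' β')
    have hL0 : ∀ x, L x = 0 := by
      intro x
      have h2 : HasFDerivAt f (0 : Rd d →L[ℝ] ℝ) x := by
        rw [hf0]; exact hasFDerivAt_const 0 x
      exact (hfd x).unique h2
    -- apply to single j 1
    have hkey : ∀ x : Rd d, E j β + ∑ j', ∑ β',
        E j' β' * pd (fun z => χ j' β' z β) j x = 0 := by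
      intro x
      have h := congrArg (fun (T : Rd d →L[ℝ] ℝ) => T (EuclideanSpace.single j 1)) (hL0 x)
      simp only [hL, ContinuousLinearMap.sum_apply, ContinuousLinearMap.smul_apply,
        ContinuousLinearMap.add_apply, ContinuousLinearMap.zero_apply,
        PiLp.proj_apply, EuclideanSpace.single_apply, smul_eq_mul] at h
      rw [show (∑ j', ∑ β', E j' β' * ((if β = β' then (1:ℝ) else 0) *
          (if j' = j then (1:ℝ) else 0) + (D j' β' x) (EuclideanSpace.single j 1)))
        = E j β + ∑ j', ∑ β', E j' β' * (D j' β' x) (EuclideanSpace.single j 1) from ?_] at h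
      · exact h
      · rw [Finset.sum_comm]
        simp only [mul_add, Finset.sum_add_distrib]
        rw [Finset.sum_comm (f := fun j' β' => E j' β' * (D j' β' x) (EuclideanSpace.single j 1))]
        congr 1
        simp [Finset.sum_ite_eq', mul_ite]
    -- integrability
    have hcont : ∀ j' β' : Fin d, Continuous (fun x => pd (fun z => χ j' β' z β) j x) := by
      intro j' β'
      have hcd : ContDiff ℝ 1 (fun z => χ j' β' z β) :=
        (EuclideanSpace.proj β : Rd d →L[ℝ] ℝ).contDiff.comp (hsm j' β')
      exact (hcd.continuous_fderiv one_ne_zero).clm_apply continuous_const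
    have hint : ∀ j' β' : Fin d,
        IntegrableOn (fun x => pd (fun z => χ j' β' z β) j x) (Ycell d) := by
      intro j' β'
      exact (((hcont j' β').locallyIntegrable).integrableOn_isCompact
        (isCompact_closedBall 0 (Real.sqrt d))).mono_set (ycell_subset d)
    have hIsum : ∫ y in Ycell d, ∑ j', ∑ β',
        E j' β' * pd (fun z => χ j' β' z β) j y = 0 := by
      rw [integral_finset_sum]
      · apply Finset.sum_eq_zero
        intro j' _
        rw [integral_finset_sum]
        · apply Finset.sum_eq_zero
          intro β' _
          rw [integral_const_mul, hmeangrad]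
          ring
        · intro β' _
          exact (hint j' β').const_mul _
      · intro j' _
        apply integrable_finset_sum
        intro β' _
        exact (hint j' β').const_mul _
    have hconst : ∀ y : Rd d, ∑ j', ∑ β',
        E j' β' * pd (fun z => χ j' β' z β) j y = -(E j β) := by
      intro y
      have := hkey y
      linarith
    have : ∫ y in Ycell d, ∑ j', ∑ β',
        E j' β' * pd (fun z => χ j' β' z β) j y = -(E j β) := by
      rw [show (fun y : Rd d => ∑ j', ∑ β', E j' β' * pd (fun z => χ j' β' z β) j y)
        = fun _ => -(E j β) from funext hconst]
      rw [setIntegral_const, measureReal_def, vol_Ycell]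
      simp
    rw [hIsum] at this
    linarith
  refine ⟨hE, ?_⟩
  have h := hzero 0
  rw [hE] at h
  simpa using h


end
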